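/- arXiv:2412.17311 — 2 statements merged into one kernel-verified Lean document; each statement's English description precedes it below -/
import Mathlib

section
/- The map σ(h) = ũ(det h)·h^{-1}·ũ(1) on the metaplectic cover G̃ of GL(2,F) is an involution: σ(σ(h)) = h for all h ∈ G̃. -/
open Matrix

variable {F M : Type*}

/-- `X(m) = m₂₁` if nonzero, else `m₂₂`. -/
def Xe [Field F] [DecidableEq F] (m : Matrix (Fin 2) (Fin 2) F) : F :=
  if m 1 0 ≠ 0 then m 1 0 else m 1 1

/-- The Kubota–Kazhdan–Patterson 2-cocycle on `GL(2,F)` attached to a Hilbert symbol `hs`. -/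
def kub [Field F] [DecidableEq F] [CommGroup M] (hs : F → F → M)
    (g₁ g₂ : GL (Fin 2) F) : M :=
  hs (Xe ((g₁ * g₂ : GL (Fin 2) F) : Matrix (Fin 2) (Fin 2) F) /
        Xe (g₁ : Matrix (Fin 2) (Fin 2) F))
     (Xe ((g₁ * g₂ : GL (Fin 2) F) : Matrix (Fin 2) (Fin 2) F) /
        (Xe (g₂ : Matrix (Fin 2) (Fin 2) F) * (g₁ : Matrix (Fin 2) (Fin 2) F).det))

/-- Multiplication in the metaplectic cover `G̃ = GL(2,F) × μ_n`. -/
def mmul [Field F] [DecidableEq F] [CommGroup M] (hs : F → F → M)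
    (h₁ h₂ : GL (Fin 2) F × M) : GL (Fin 2) F × M :=
  (h₁.1 * h₂.1, kub hs h₁.1 h₂.1 * h₁.2 * h₂.2)

/-- Inversion in the metaplectic cover. -/
def minv [Field F] [DecidableEq F] [CommGroup M] (hs : F → F → M)
    (h : GL (Fin 2) F × M) : GL (Fin 2) F × M :=
  (h.1⁻¹, (kub hs h.1 h.1⁻¹)⁻¹ * h.2⁻¹)

/-- `z(λ) = λ I₂` as an element of `GL(2,F)`. -/
def zGL [Field F] (lam : Fˣ) : GL (Fin 2) F :=
  Units.map (Matrix.scalar (Fin 2)).toMonoidHom lam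

/-- `z̃(λ) = (λ I₂, 1)`. -/
def ztil [Field F] [CommGroup M] (lam : Fˣ) : GL (Fin 2) F × M := (zGL lam, 1)

/-- `u(λ) = diag(λ, -λ)` as an element of `GL(2,F)`. -/
def uGL [Field F] (lam : Fˣ) : GL (Fin 2) F :=
  ⟨!![(lam : F), 0; 0, -(lam : F)], !![((lam⁻¹ : Fˣ) : F), 0; 0, -((lam⁻¹ : Fˣ) : F)],
    by simp [Matrix.mul_fin_two, Matrix.one_fin_two],
    by simp [Matrix.mul_fin_two, Matrix.one_fin_two]⟩

/-- `ũ(λ) = (u(λ), 1)`. -/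
def util [Field F] [CommGroup M] (lam : Fˣ) : GL (Fin 2) F × M := (uGL lam, 1)

/-- The determinant of an element of `GL(2,F)`, as a unit of `F`. -/
def detU [Field F] (g : GL (Fin 2) F) : Fˣ := Units.map Matrix.detMonoidHom g

/-- The lift `σ(h) = ũ(det h) h⁻¹ ũ(1)` of the standard involution. -/
def sigmaM [Field F] [DecidableEq F] [CommGroup M] (hs : F → F → M)
    (h : GL (Fin 2) F × M) : GL (Fin 2) F × M :=
  mmul hs (mmul hs (util (detU h.1)) (minv hs h)) (util 1)

section MyAux
set_option linter.unusedSectionVars false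
variable [Field F] [DecidableEq F] [CommGroup M]

lemma my_inv_coe (g : GL (Fin 2) F) :
    ((g⁻¹ : GL (Fin 2) F) : Matrix (Fin 2) (Fin 2) F)
      = ((g : Matrix (Fin 2) (Fin 2) F).det)⁻¹ •
          !![g.val 1 1, -g.val 0 1; -g.val 1 0, g.val 0 0] := by
  rw [Matrix.coe_units_inv, Matrix.inv_def, Ring.inverse_eq_inv]
  congr 1
  rw [Matrix.eta_fin_two (g : Matrix (Fin 2) (Fin 2) F), adjugate_fin_two]

lemma my_det_ne (g : GL (Fin 2) F) : (g : Matrix (Fin 2) (Fin 2) F).det ≠ 0 :=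
  ((Matrix.isUnit_iff_isUnit_det _).mp g.isUnit).ne_zero

lemma my_detU_coe (g : GL (Fin 2) F) : ((detU g : Fˣ) : F) = (g : Matrix (Fin 2) (Fin 2) F).det := rfl

lemma my_uGL_coe (lam : Fˣ) :
    ((uGL lam : GL (Fin 2) F) : Matrix (Fin 2) (Fin 2) F) = !![(lam : F), 0; 0, -(lam : F)] := rfl

lemma my_t_coe (g : GL (Fin 2) F) :
    ((uGL (detU g) * g⁻¹ : GL (Fin 2) F) : Matrix (Fin 2) (Fin 2) F)
      = !![g.val 1 1, -(g.val 0 1); g.val 1 0, -(g.val 0 0)] := by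
  have hd := my_det_ne g
  rw [Units.val_mul, my_inv_coe, my_uGL_coe, my_detU_coe]
  ext i j
  fin_cases i <;> fin_cases j <;>
    simp [Matrix.mul_apply, Fin.sum_univ_two] <;> field_simp

lemma my_s_coe (g : GL (Fin 2) F) :
    ((uGL (detU g) * g⁻¹ * uGL 1 : GL (Fin 2) F) : Matrix (Fin 2) (Fin 2) F)
      = !![g.val 1 1, g.val 0 1; g.val 1 0, g.val 0 0] := by
  rw [Units.val_mul, my_t_coe, my_uGL_coe]
  ext i j
  fin_cases i <;> fin_cases j <;>
    simp [Matrix.mul_apply, Fin.sum_univ_two]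

def kappa (hs : F → F → M) (g : GL (Fin 2) F) : M :=
  kub hs (uGL (detU g) * g⁻¹) (uGL 1) * kub hs (uGL (detU g)) g⁻¹ * (kub hs g g⁻¹)⁻¹

lemma my_hs_one_left (hs : F → F → M)
    (hmul_left : ∀ a b c : F, a ≠ 0 → b ≠ 0 → c ≠ 0 → hs (a * b) c = hs a c * hs b c)
    (x : F) (hx : x ≠ 0) : hs 1 x = 1 := by
  have h := hmul_left 1 1 x one_ne_zero one_ne_zero hx
  rw [one_mul] at h
  exact (right_eq_mul.mp h)

lemma my_hs_one_right (hs : F → F → M)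
    (hmul_right : ∀ a b c : F, a ≠ 0 → b ≠ 0 → c ≠ 0 → hs a (b * c) = hs a b * hs a c)
    (x : F) (hx : x ≠ 0) : hs x 1 = 1 := by
  have h := hmul_right x 1 1 hx one_ne_zero one_ne_zero
  rw [one_mul] at h
  exact (right_eq_mul.mp h)

lemma my_hs_inv_right (hs : F → F → M)
    (hmul_right : ∀ a b c : F, a ≠ 0 → b ≠ 0 → c ≠ 0 → hs a (b * c) = hs a b * hs a c)
    (x y : F) (hx : x ≠ 0) (hy : y ≠ 0) : hs x y⁻¹ = (hs x y)⁻¹ := by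
  have h := hmul_right x y y⁻¹ hx hy (inv_ne_zero hy)
  rw [mul_inv_cancel₀ hy, my_hs_one_right hs hmul_right x hx] at h
  exact (eq_inv_of_mul_eq_one_left (by rw [mul_comm]; exact h.symm))

lemma my_hs_inv_left (hs : F → F → M)
    (hmul_left : ∀ a b c : F, a ≠ 0 → b ≠ 0 → c ≠ 0 → hs (a * b) c = hs a c * hs b c)
    (x y : F) (hx : x ≠ 0) (hy : y ≠ 0) : hs x⁻¹ y = (hs x y)⁻¹ := by
  have h := hmul_left x x⁻¹ y hx (inv_ne_zero hx) hy
  rw [mul_inv_cancel₀ hx, my_hs_one_left hs hmul_left y hy] at h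
  exact (eq_inv_of_mul_eq_one_left (by rw [mul_comm]; exact h.symm))

lemma my_hs_neg_self (hs : F → F → M)
    (hmul_left : ∀ a b c : F, a ≠ 0 → b ≠ 0 → c ≠ 0 → hs (a * b) c = hs a c * hs b c)
    (hmul_right : ∀ a b c : F, a ≠ 0 → b ≠ 0 → c ≠ 0 → hs a (b * c) = hs a b * hs a c)
    (hsteinberg : ∀ a : F, a ≠ 0 → 1 - a ≠ 0 → hs a (1 - a) = 1)
    (x : F) (hx : x ≠ 0) : hs x (-x) = 1 := by
  by_cases h1 : x = 1
  · subst h1; exact my_hs_one_left hs hmul_left (-1) (neg_ne_zero.mpr one_ne_zero)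
  · have hx1 : (1 : F) - x ≠ 0 := sub_ne_zero.mpr (Ne.symm h1)
    have hxi : x⁻¹ ≠ 0 := inv_ne_zero hx
    have hxi1 : (1 : F) - x⁻¹ ≠ 0 := by
      intro h
      have h' : x⁻¹ = 1 := (sub_eq_zero.mp h).symm
      exact h1 (by simpa using inv_eq_one.mp h')
    have key : -x = (1 - x) * (1 - x⁻¹)⁻¹ := by
      rw [eq_mul_inv_iff_mul_eq₀ hxi1]
      field_simp
      ring
    rw [key, hmul_right x (1-x) (1-x⁻¹)⁻¹ hx hx1 (inv_ne_zero hxi1),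
      hsteinberg x hx hx1, my_hs_inv_right hs hmul_right x (1-x⁻¹) hx hxi1, one_mul]
    have h2 : hs x (1 - x⁻¹) = (hs x⁻¹ (1 - x⁻¹))⁻¹ := by
      rw [← my_hs_inv_left hs hmul_left x⁻¹ (1-x⁻¹) hxi hxi1, inv_inv]
    rw [h2, hsteinberg x⁻¹ hxi hxi1]
    simp

lemma my_hs_neg_one (hs : F → F → M)
    (hmul_left : ∀ a b c : F, a ≠ 0 → b ≠ 0 → c ≠ 0 → hs (a * b) c = hs a c * hs b c)
    (hmul_right : ∀ a b c : F, a ≠ 0 → b ≠ 0 → c ≠ 0 → hs a (b * c) = hs a b * hs a c)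
    (hantisym : ∀ a b : F, a ≠ 0 → b ≠ 0 → hs a b * hs b a = 1)
    (hsteinberg : ∀ a : F, a ≠ 0 → 1 - a ≠ 0 → hs a (1 - a) = 1)
    (x : F) (hx : x ≠ 0) : hs (-1) x = hs x x := by
  have hm1 : (-1 : F) ≠ 0 := neg_ne_zero.mpr one_ne_zero
  have h1 : hs x (-1) * hs x x = 1 := by
    rw [← hmul_right x (-1) x hx hm1 hx, neg_one_mul,
      my_hs_neg_self hs hmul_left hmul_right hsteinberg x hx]
  have h2 := hantisym x (-1) hx hm1
  have e1 : hs (-1) x = (hs x (-1))⁻¹ :=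
    eq_inv_of_mul_eq_one_left (by rw [mul_comm] at h2; exact h2)
  have e2 : hs x x = (hs x (-1))⁻¹ :=
    eq_inv_of_mul_eq_one_left (by rw [mul_comm] at h1; exact h1)
  rw [e1, e2]

lemma Xe_of (w x y z : F) : Xe !![w, x; y, z] = if y ≠ 0 then y else z := by
  simp [Xe]

lemma Xe_smul {r : F} (hr : r ≠ 0) (w x y z : F) :
    Xe (r • !![w, x; y, z]) = if y ≠ 0 then r * y else r * z := by
  by_cases hy : y = 0 <;> simp [Xe, hy, hr, mul_ne_zero hr]

lemma kappa_formula (hs : F → F → M)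
    (hmul_left : ∀ a b c : F, a ≠ 0 → b ≠ 0 → c ≠ 0 → hs (a * b) c = hs a c * hs b c)
    (hmul_right : ∀ a b c : F, a ≠ 0 → b ≠ 0 → c ≠ 0 → hs a (b * c) = hs a b * hs a c)
    (hantisym : ∀ a b : F, a ≠ 0 → b ≠ 0 → hs a b * hs b a = 1)
    (hsteinberg : ∀ a : F, a ≠ 0 → 1 - a ≠ 0 → hs a (1 - a) = 1)
    (g : GL (Fin 2) F) :
    kappa hs g = if g.val 1 0 ≠ 0
      then hs (-(g.val 1 0) / (g : Matrix (Fin 2) (Fin 2) F).det)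
             ((g : Matrix (Fin 2) (Fin 2) F).det)⁻¹
      else 1 := by
  have hgg : ((g * g⁻¹ : GL (Fin 2) F) : Matrix (Fin 2) (Fin 2) F) = 1 := by
    rw [mul_inv_cancel]; rfl
  have hX1 : Xe ((1 : Matrix (Fin 2) (Fin 2) F)) = 1 := by simp [Xe, Matrix.one_apply]
  have hΔ0 : (g : Matrix (Fin 2) (Fin 2) F).det ≠ 0 := my_det_ne g
  have hdet0 : (g : Matrix (Fin 2) (Fin 2) F).det
      = g.val 0 0 * g.val 1 1 - g.val 0 1 * g.val 1 0 := Matrix.det_fin_two _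
  unfold kappa kub
  rw [hgg, hX1]
  rw [my_s_coe g, my_t_coe g, my_uGL_coe, my_inv_coe]
  simp only [my_uGL_coe, my_detU_coe]
  rw [show Xe (g : Matrix (Fin 2) (Fin 2) F)
        = if g.val 1 0 ≠ 0 then g.val 1 0 else g.val 1 1 from rfl]
  simp only [Units.val_one]
  rw [Xe_of, Xe_of, Xe_of, Xe_of, Xe_smul (inv_ne_zero hΔ0),
    Matrix.det_fin_two_of, Matrix.det_fin_two_of]
  set a := g.val 0 0 with ha
  set b := g.val 0 1 with hb
  set c := g.val 1 0 with hcc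
  set d := g.val 1 1 with hd
  set Δ := (g : Matrix (Fin 2) (Fin 2) F).det with hΔdef
  by_cases hc0 : c = 0
  · -- case c = 0
    have hΔad : Δ = a * d := by rw [hdet0, hc0]; ring
    have hane : a ≠ 0 := fun h => hΔ0 (by rw [hΔad, h, zero_mul])
    have hdne : d ≠ 0 := fun h => hΔ0 (by rw [hΔad, h, mul_zero])
    simp only [hc0, neg_zero, ne_eq, not_true_eq_false, if_false, ite_self,
      not_false_iff]
    have hAne : a⁻¹ ≠ 0 := inv_ne_zero hane
    have hDne : d⁻¹ ≠ 0 := inv_ne_zero hdne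
    have e1 : a / -a = -1 := by field_simp <;> ring
    have e2 : a / (-1 * (d * -a - -b * 0)) = d⁻¹ := by field_simp <;> ring
    have e3 : -a / -Δ = d⁻¹ := by rw [hΔad]; field_simp <;> ring
    have e4 : -a / (Δ⁻¹ * a * (Δ * -Δ - 0 * 0)) = Δ⁻¹ := by field_simp <;> ring
    have e5 : (1:F) / d = d⁻¹ := one_div d
    have e6 : (1:F) / (Δ⁻¹ * a * Δ) = a⁻¹ := by field_simp <;> ring
    rw [e1, e2, e3, e4, e5, e6]
    have hΔinv : Δ⁻¹ = a⁻¹ * d⁻¹ := by rw [hΔad, mul_inv]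
    rw [hΔinv, hmul_right d⁻¹ a⁻¹ d⁻¹ hDne hAne hDne,
      my_hs_neg_one hs hmul_left hmul_right hantisym hsteinberg d⁻¹ hDne]
    have hsq := hantisym d⁻¹ d⁻¹ hDne hDne
    have hre : hs d⁻¹ d⁻¹ * (hs d⁻¹ a⁻¹ * hs d⁻¹ d⁻¹) * (hs d⁻¹ a⁻¹)⁻¹
        = (hs d⁻¹ d⁻¹ * hs d⁻¹ d⁻¹) * (hs d⁻¹ a⁻¹ * (hs d⁻¹ a⁻¹)⁻¹) := by ac_rfl
    rw [hre, hsq, mul_inv_cancel, one_mul]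
  · -- case c ≠ 0
    simp only [hc0, ne_eq, not_true_eq_false, if_false, not_false_iff, if_true,
      neg_ne_zero, neg_zero]
    have f1 : c / c = 1 := div_self hc0
    have f2 : -1 * (d * -a - -b * c) = Δ := by rw [hdet0]; ring
    have f3 : c / -Δ = -c / Δ := by rw [div_neg, neg_div]
    have f4 : c / (Δ⁻¹ * -c * (Δ * -Δ - 0 * 0)) = Δ⁻¹ := by field_simp <;> ring
    have f5 : Δ⁻¹ * -c * Δ = -c := by field_simp <;> ring
    rw [f1, f2, f3, f4, f5, one_div, one_div, inv_neg,
      my_hs_one_left hs hmul_left (c/Δ) (div_ne_zero hc0 hΔ0),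
      my_hs_neg_self hs hmul_left hmul_right hsteinberg c⁻¹ (inv_ne_zero hc0)]
    simp

lemma my_sigma_eq (hs : F → F → M) (h : GL (Fin 2) F × M) :
    sigmaM hs h = (uGL (detU h.1) * h.1⁻¹ * uGL 1, kappa hs h.1 * h.2⁻¹) := by
  unfold sigmaM mmul minv util kappa
  refine Prod.ext rfl ?_
  simp [mul_assoc]

theorem sigma_involution' (hs : F → F → M)
    (hmul_left : ∀ a b c : F, a ≠ 0 → b ≠ 0 → c ≠ 0 → hs (a * b) c = hs a c * hs b c)
    (hmul_right : ∀ a b c : F, a ≠ 0 → b ≠ 0 → c ≠ 0 → hs a (b * c) = hs a b * hs a c)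
    (hantisym : ∀ a b : F, a ≠ 0 → b ≠ 0 → hs a b * hs b a = 1)
    (hsteinberg : ∀ a : F, a ≠ 0 → 1 - a ≠ 0 → hs a (1 - a) = 1)
    (h : GL (Fin 2) F × M) :
    sigmaM hs (sigmaM hs h) = h := by
  obtain ⟨g, ε⟩ := h
  rw [my_sigma_eq, my_sigma_eq]
  simp only
  have hk : kappa hs (uGL (detU g) * g⁻¹ * uGL 1) = kappa hs g := by
    rw [kappa_formula hs hmul_left hmul_right hantisym hsteinberg,
      kappa_formula hs hmul_left hmul_right hantisym hsteinberg g,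
      my_s_coe g]
    have h10 : (!![g.val 1 1, g.val 0 1; g.val 1 0, g.val 0 0]) 1 0 = g.val 1 0 := by
      simp
    have hdd : (!![g.val 1 1, g.val 0 1; g.val 1 0, g.val 0 0]).det
        = ((g : Matrix (Fin 2) (Fin 2) F)).det := by
      rw [Matrix.det_fin_two_of, Matrix.det_fin_two]; ring
    rw [h10, hdd]
  refine Prod.ext ?_ ?_
  · show uGL (detU (uGL (detU g) * g⁻¹ * uGL 1)) * (uGL (detU g) * g⁻¹ * uGL 1)⁻¹ * uGL 1 = g
    apply Units.ext
    rw [my_s_coe (uGL (detU g) * g⁻¹ * uGL 1), my_s_coe g]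
    conv_rhs => rw [Matrix.eta_fin_two (g : Matrix (Fin 2) (Fin 2) F)]
    simp
  · show kappa hs (uGL (detU g) * g⁻¹ * uGL 1) * (kappa hs g * ε⁻¹)⁻¹ = ε
    rw [hk, mul_inv, inv_inv, mul_comm (kappa hs g)⁻¹ ε, ← mul_assoc]
    exact mul_inv_cancel_comm _ _

end MyAux

set_option maxHeartbeats 1000000 in
/-- The map `σ(h) = ũ(det h) h⁻¹ ũ(1)` on the metaplectic cover is an involution:
`σ(σ(h)) = h`. -/
theorem sigma_involution [Field F] [DecidableEq F] [CommGroup M] (hs : F → F → M)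
    (hmul_left : ∀ a b c : F, a ≠ 0 → b ≠ 0 → c ≠ 0 → hs (a * b) c = hs a c * hs b c)
    (hmul_right : ∀ a b c : F, a ≠ 0 → b ≠ 0 → c ≠ 0 → hs a (b * c) = hs a b * hs a c)
    (hantisym : ∀ a b : F, a ≠ 0 → b ≠ 0 → hs a b * hs b a = 1)
    (hsteinberg : ∀ a : F, a ≠ 0 → 1 - a ≠ 0 → hs a (1 - a) = 1)
    (h : GL (Fin 2) F × M) :
    sigmaM hs (sigmaM hs h) = h :=
  sigma_involution' hs hmul_left hmul_right hantisym hsteinberg h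
end

section
/- Let h = (g,1) in the metaplectic cover G̃ of GL(2,F) with g = [[a,b],[c,d]]. Then σ(h) = (τ(g), ⟨det g, c⟩) if c ≠ 0, and σ(h) = (τ(g), 1) if c = 0, where τ(g) = w₀gᵀw₀. In particular p(σ(h)) = τ(p(h)), i.e., σ is a lift of the standard involution τ to G̃. -/
open Matrix

variable {F M : Type*}

section Helpers
variable [Field F] [CommGroup M] (hs : F → F → M)

lemma hs_one_right' (hmul_right : ∀ a b c : F, a ≠ 0 → b ≠ 0 → c ≠ 0 → hs a (b * c) = hs a b * hs a c)
    (a : F) (ha : a ≠ 0) : hs a 1 = 1 := by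
  have h := hmul_right a 1 1 ha one_ne_zero one_ne_zero
  rw [mul_one] at h
  exact right_eq_mul.mp h

lemma hs_one_left' (hmul_left : ∀ a b c : F, a ≠ 0 → b ≠ 0 → c ≠ 0 → hs (a * b) c = hs a c * hs b c)
    (b : F) (hb : b ≠ 0) : hs 1 b = 1 := by
  have h := hmul_left 1 1 b one_ne_zero one_ne_zero hb
  rw [mul_one] at h
  exact right_eq_mul.mp h

lemma hs_inv_right' (hmul_right : ∀ a b c : F, a ≠ 0 → b ≠ 0 → c ≠ 0 → hs a (b * c) = hs a b * hs a c)
    (a b : F) (ha : a ≠ 0) (hb : b ≠ 0) : hs a b⁻¹ = (hs a b)⁻¹ := by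
  have h := hmul_right a b b⁻¹ ha hb (inv_ne_zero hb)
  rw [mul_inv_cancel₀ hb, hs_one_right' hs hmul_right a ha] at h
  exact eq_inv_of_mul_eq_one_right (mul_comm (hs a b) (hs a b⁻¹) ▸ h.symm)

lemma hs_inv_left' (hmul_left : ∀ a b c : F, a ≠ 0 → b ≠ 0 → c ≠ 0 → hs (a * b) c = hs a c * hs b c)
    (a b : F) (ha : a ≠ 0) (hb : b ≠ 0) : hs a⁻¹ b = (hs a b)⁻¹ := by
  have h := hmul_left a a⁻¹ b ha (inv_ne_zero ha) hb
  rw [mul_inv_cancel₀ ha, hs_one_left' hs hmul_left b hb] at h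
  exact eq_inv_of_mul_eq_one_right (mul_comm (hs a b) (hs a⁻¹ b) ▸ h.symm)

lemma hs_neg_self'
    (hmul_left : ∀ a b c : F, a ≠ 0 → b ≠ 0 → c ≠ 0 → hs (a * b) c = hs a c * hs b c)
    (hmul_right : ∀ a b c : F, a ≠ 0 → b ≠ 0 → c ≠ 0 → hs a (b * c) = hs a b * hs a c)
    (hsteinberg : ∀ a : F, a ≠ 0 → 1 - a ≠ 0 → hs a (1 - a) = 1)
    (a : F) (ha : a ≠ 0) : hs a (-a) = 1 := by
  by_cases h1 : a = 1
  · subst h1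
    simpa using hs_one_left' hs hmul_left (-1) (by norm_num)
  · have h1a : (1 : F) - a ≠ 0 := sub_ne_zero.2 (Ne.symm h1)
    have hai : (1 : F) - a⁻¹ ≠ 0 := by
      rw [sub_ne_zero]
      intro h
      exact h1 (by rw [← inv_inv a, ← h, inv_one])
    have key : (-a : F) = (1 - a) * (1 - a⁻¹)⁻¹ := by
      rw [eq_comm, mul_inv_eq_iff_eq_mul₀ hai, mul_sub, mul_one, neg_mul,
        mul_inv_cancel₀ ha]
      ring
    rw [key, hmul_right a (1-a) (1-a⁻¹)⁻¹ ha h1a (inv_ne_zero hai),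
      hsteinberg a ha h1a, one_mul,
      hs_inv_right' hs hmul_right a (1-a⁻¹) ha hai,
      ← hs_inv_left' hs hmul_left a (1-a⁻¹) ha hai,
      hsteinberg a⁻¹ (inv_ne_zero ha) hai]

lemma hs_self_eq_neg_one
    (hmul_left : ∀ a b c : F, a ≠ 0 → b ≠ 0 → c ≠ 0 → hs (a * b) c = hs a c * hs b c)
    (hmul_right : ∀ a b c : F, a ≠ 0 → b ≠ 0 → c ≠ 0 → hs a (b * c) = hs a b * hs a c)
    (hsteinberg : ∀ a : F, a ≠ 0 → 1 - a ≠ 0 → hs a (1 - a) = 1)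
    (a : F) (ha : a ≠ 0) : hs a a = hs a (-1) := by
  have h := hmul_right a (-1) (-a) ha (by norm_num) (neg_ne_zero.2 ha)
  rw [hs_neg_self' hs hmul_left hmul_right hsteinberg a ha, mul_one,
    show (-1 : F) * -a = a by ring] at h
  exact h

end Helpers

/-- For `h = (g,1)` with `g = [[a,b],[c,d]]`, one has
`σ(h) = (τ(g), ⟨det g, c⟩)` if `c ≠ 0` and `σ(h) = (τ(g), 1)` if `c = 0`, where
`τ(g) = w₀ gᵀ w₀`. In particular `σ` is a lift of the standard involution `τ`. -/
theorem sigma_lifts_tau [Field F] [DecidableEq F] [CommGroup M] (hs : F → F → M)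
    (hmul_left : ∀ a b c : F, a ≠ 0 → b ≠ 0 → c ≠ 0 → hs (a * b) c = hs a c * hs b c)
    (hmul_right : ∀ a b c : F, a ≠ 0 → b ≠ 0 → c ≠ 0 → hs a (b * c) = hs a b * hs a c)
    (hantisym : ∀ a b : F, a ≠ 0 → b ≠ 0 → hs a b * hs b a = 1)
    (hsteinberg : ∀ a : F, a ≠ 0 → 1 - a ≠ 0 → hs a (1 - a) = 1)
    (g : GL (Fin 2) F) :
    ((sigmaM hs ((g, 1) : GL (Fin 2) F × M)).1 : Matrix (Fin 2) (Fin 2) F) =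
      !![(0 : F), 1; 1, 0] * (g : Matrix (Fin 2) (Fin 2) F)ᵀ * !![(0 : F), 1; 1, 0] ∧
    (sigmaM hs ((g, 1) : GL (Fin 2) F × M)).2 =
      (if (g : Matrix (Fin 2) (Fin 2) F) 1 0 ≠ 0 then
        hs (g : Matrix (Fin 2) (Fin 2) F).det ((g : Matrix (Fin 2) (Fin 2) F) 1 0)
      else 1) := by
  set A : Matrix (Fin 2) (Fin 2) F := (g : Matrix (Fin 2) (Fin 2) F) with hAdef
  have hD : A.det ≠ 0 := ((Matrix.isUnit_iff_isUnit_det A).mp g.isUnit).ne_zero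
  have hginv : ((g⁻¹ : GL (Fin 2) F) : Matrix (Fin 2) (Fin 2) F)
      = (A.det)⁻¹ • !![A 1 1, -(A 0 1); -(A 1 0), A 0 0] := by
    rw [Matrix.coe_units_inv, Matrix.inv_def, Ring.inverse_eq_inv']
    congr 1
    rw [Matrix.eta_fin_two A, Matrix.adjugate_fin_two]
    simp
    exact ⟨⟨rfl, rfl⟩, rfl, rfl⟩
  have huD : ((uGL (detU g) : GL (Fin 2) F) : Matrix (Fin 2) (Fin 2) F)
      = !![A.det, 0; 0, -A.det] := rfl
  have hu1 : ((uGL (1 : Fˣ) : GL (Fin 2) F) : Matrix (Fin 2) (Fin 2) F)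
      = !![(1 : F), 0; 0, -1] := rfl
  have hgg : ((g * g⁻¹ : GL (Fin 2) F) : Matrix (Fin 2) (Fin 2) F) = 1 := by
    rw [mul_inv_cancel, Units.val_one]
  have hP1 : ((uGL (detU g) * g⁻¹ : GL (Fin 2) F) : Matrix (Fin 2) (Fin 2) F)
      = !![A 1 1, -(A 0 1); A 1 0, -(A 0 0)] := by
    rw [Units.val_mul, hginv, huD]
    ext i j
    fin_cases i <;> fin_cases j <;>
      simp [Matrix.mul_apply, Fin.sum_univ_two] <;> field_simp
  have hP2 : ((uGL (detU g) * g⁻¹ * uGL 1 : GL (Fin 2) F) : Matrix (Fin 2) (Fin 2) F)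
      = !![A 1 1, A 0 1; A 1 0, A 0 0] := by
    rw [Units.val_mul, hP1, hu1]
    ext i j
    fin_cases i <;> fin_cases j <;>
      simp [Matrix.mul_apply, Fin.sum_univ_two]
  have hXe1 : Xe (1 : Matrix (Fin 2) (Fin 2) F) = 1 := by
    simp [Xe, Matrix.one_apply]
  have hXeuD : Xe ((uGL (detU g) : GL (Fin 2) F) : Matrix (Fin 2) (Fin 2) F) = -A.det := by
    rw [huD]; simp [Xe]
  have hXeu1 : Xe ((uGL (1 : Fˣ) : GL (Fin 2) F) : Matrix (Fin 2) (Fin 2) F) = -1 := by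
    rw [hu1]; simp [Xe]
  have hdetuD : ((uGL (detU g) : GL (Fin 2) F) : Matrix (Fin 2) (Fin 2) F).det
      = -(A.det * A.det) := by
    rw [huD, Matrix.det_fin_two_of]; ring
  have hdetP1 : ((uGL (detU g) * g⁻¹ : GL (Fin 2) F) : Matrix (Fin 2) (Fin 2) F).det
      = -A.det := by
    rw [hP1, Matrix.det_fin_two_of, Matrix.det_fin_two A]; ring
  constructor
  · show ((uGL (detU g) * g⁻¹ * uGL 1 : GL (Fin 2) F) : Matrix (Fin 2) (Fin 2) F) = _
    rw [hP2]
    conv_rhs => rw [Matrix.eta_fin_two A]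
    ext i j
    fin_cases i <;> fin_cases j <;>
      simp [Matrix.mul_apply, Fin.sum_univ_two, Matrix.vecHead, Matrix.vecTail, Matrix.vecMul, dotProduct]
  · show kub hs (uGL (detU g) * g⁻¹) (uGL 1) *
        (kub hs (uGL (detU g)) g⁻¹ * 1 * ((kub hs g g⁻¹)⁻¹ * 1⁻¹)) * 1 = _
    rw [inv_one, mul_one, mul_one, mul_one]
    simp only [kub]
    rw [hgg, hXe1, hXeuD, hXeu1, hdetuD, hdetP1, hP2, hP1, hginv, ← hAdef]
    rcases eq_or_ne (A 1 0) 0 with hc | hc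
    · -- c = 0 case
      rw [if_neg (fun h => h hc)]
      have hDad : A.det = A 0 0 * A 1 1 := by
        rw [Matrix.det_fin_two A, hc]; ring
      have ha : A 0 0 ≠ 0 := fun h => hD (by rw [hDad, h, zero_mul])
      have hd : A 1 1 ≠ 0 := fun h => hD (by rw [hDad, h, mul_zero])
      have hXA : Xe A = A 1 1 := by
        rw [Xe, if_neg (fun h => h hc)]
      have hXinv : Xe ((A.det)⁻¹ • !![A 1 1, -(A 0 1); -(A 1 0), A 0 0])
          = A.det⁻¹ * A 0 0 := by
        rw [Xe, if_neg]
        · simp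
        · simp [hc]
      have hXP1 : Xe !![A 1 1, -(A 0 1); A 1 0, -(A 0 0)] = -(A 0 0) := by
        rw [Xe, if_neg]
        · simp
        · simp [hc]
      have hXP2 : Xe !![A 1 1, A 0 1; A 1 0, A 0 0] = A 0 0 := by
        rw [Xe, if_neg]
        · simp
        · simp [hc]
      rw [hXA, hXinv, hXP1, hXP2]
      rw [show A 0 0 / -(A 0 0) = (-1 : F) by field_simp,
        show A 0 0 / (-1 * -A.det) = (A 1 1)⁻¹ by rw [hDad]; field_simp,
        show -(A 0 0) / -A.det = (A 1 1)⁻¹ by rw [hDad]; field_simp,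
        show -(A 0 0) / (A.det⁻¹ * A 0 0 * -(A.det * A.det)) = (A 0 0)⁻¹ * (A 1 1)⁻¹ by
          rw [hDad]; field_simp,
        show (1 : F) / A 1 1 = (A 1 1)⁻¹ from one_div _,
        show (1 : F) / (A.det⁻¹ * A 0 0 * A.det) = (A 0 0)⁻¹ by field_simp]
      rw [hmul_right ((A 1 1)⁻¹) ((A 0 0)⁻¹) ((A 1 1)⁻¹)
        (inv_ne_zero hd) (inv_ne_zero ha) (inv_ne_zero hd)]
      rw [mul_comm (hs (A 1 1)⁻¹ (A 0 0)⁻¹) (hs (A 1 1)⁻¹ (A 1 1)⁻¹), mul_assoc,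
        mul_inv_cancel, mul_one]
      rw [hs_inv_right' hs hmul_right (-1) (A 1 1) (by norm_num) hd,
        hs_inv_left' hs hmul_left (A 1 1) ((A 1 1)⁻¹) hd (inv_ne_zero hd),
        hs_inv_right' hs hmul_right (A 1 1) (A 1 1) hd hd, inv_inv]
      rw [inv_eq_of_mul_eq_one_right (hantisym (-1) (A 1 1) (by norm_num) hd)]
      rw [← hs_self_eq_neg_one hs hmul_left hmul_right hsteinberg (A 1 1) hd]
      exact hantisym (A 1 1) (A 1 1) hd hd
    · -- c ≠ 0 case
      rw [if_pos hc]
      have hXA : Xe A = A 1 0 := by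
        rw [Xe, if_pos hc]
      have hXinv : Xe ((A.det)⁻¹ • !![A 1 1, -(A 0 1); -(A 1 0), A 0 0])
          = A.det⁻¹ * -(A 1 0) := by
        rw [Xe, if_pos]
        · simp
        · simp [hc, hD]
      have hXP1 : Xe !![A 1 1, -(A 0 1); A 1 0, -(A 0 0)] = A 1 0 := by
        rw [Xe, if_pos]
        · simp
        · simpa using hc
      have hXP2 : Xe !![A 1 1, A 0 1; A 1 0, A 0 0] = A 1 0 := by
        rw [Xe, if_pos]
        · simp
        · simpa using hc
      rw [hXA, hXinv, hXP1, hXP2]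
      rw [div_self hc,
        show A 1 0 / (-1 * -A.det) = A 1 0 * A.det⁻¹ by field_simp,
        show A 1 0 / -A.det = -(A 1 0) * A.det⁻¹ by
          rw [div_neg, div_eq_mul_inv, neg_mul],
        show A 1 0 / (A.det⁻¹ * -(A 1 0) * -(A.det * A.det)) = A.det⁻¹ by
          field_simp,
        show (1 : F) / A 1 0 = (A 1 0)⁻¹ from one_div _,
        show (1 : F) / (A.det⁻¹ * -(A 1 0) * A.det) = -(A 1 0)⁻¹ by field_simp]
      rw [hs_one_left' hs hmul_left (A 1 0 * A.det⁻¹) (mul_ne_zero hc (inv_ne_zero hD)),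
        one_mul,
        hs_neg_self' hs hmul_left hmul_right hsteinberg ((A 1 0)⁻¹) (inv_ne_zero hc),
        inv_one, mul_one]
      rw [hmul_left (-(A 1 0)) (A.det⁻¹) (A.det⁻¹) (neg_ne_zero.2 hc)
        (inv_ne_zero hD) (inv_ne_zero hD)]
      rw [hs_inv_right' hs hmul_right (-(A 1 0)) A.det (neg_ne_zero.2 hc) hD,
        hs_inv_left' hs hmul_left A.det (A.det⁻¹) hD (inv_ne_zero hD),
        hs_inv_right' hs hmul_right A.det A.det hD hD, inv_inv]
      rw [show -(A 1 0) = (-1 : F) * A 1 0 by ring,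
        hmul_left (-1) (A 1 0) A.det (by norm_num) hc hD, mul_inv]
      rw [inv_eq_of_mul_eq_one_right (hantisym (-1) A.det (by norm_num) hD),
        inv_eq_of_mul_eq_one_right (hantisym (A 1 0) A.det hc hD)]
      rw [← hs_self_eq_neg_one hs hmul_left hmul_right hsteinberg A.det hD]
      rw [mul_comm (hs A.det A.det) (hs A.det (A 1 0)), mul_assoc,
        hantisym A.det A.det hD hD, mul_one]
end
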